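/- Let A ∈ ℝ^{m×n}, let Σ_{s,n} be the set of s-sparse vectors of Euclidean norm at most 1 in ℝⁿ, and let Σ_{s,m} be the analogous set in ℝ^m. If A satisfies RIP(s,δ) (i.e., |‖Ax‖₂² − ‖x‖₂²| ≤ max{δ,δ²}‖x‖₂² for all s-sparse x) and sup_{x∈Σ_{s,n}} ‖Ax‖_{[s]} ≤ max{δ,δ²}, then sup over x ∈ Σ_{s,n}, y ∈ Σ_{s,m} of |‖[A Id_m](x,y)ᵀ‖₂² − ‖(x,y)ᵀ‖₂²| ≤ 3·max{δ,δ²}. -/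

import Mathlib

open Matrix

/-- `x` is `s`-sparse: it has at most `s` nonzero entries. -/
def sparse {ι : Type*} (s : ℕ) (x : ι → ℝ) : Prop := {i | x i ≠ 0}.ncard ≤ s

/-- `A` satisfies the restricted isometry property `RIP(s, δ)`. -/
def RIP {m : ℕ} {ι : Type*} [Fintype ι] (A : Matrix (Fin m) ι ℝ) (s : ℕ) (δ : ℝ) : Prop :=
  ∀ x : ι → ℝ, sparse s x →
    |A.mulVec x ⬝ᵥ A.mulVec x - x ⬝ᵥ x| ≤ max δ (δ ^ 2) * (x ⬝ᵥ x)

theorem stmt10 (m n : ℕ) (A : Matrix (Fin m) (Fin n) ℝ) (s : ℕ) (δ : ℝ) (hδ : 0 < δ)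
    (hRIP : RIP A s δ)
    (hkNorm : ∀ x : Fin n → ℝ, sparse s x → x ⬝ᵥ x ≤ 1 →
      ∀ I : Finset (Fin m), I.card ≤ s →
        Real.sqrt (∑ i ∈ I, (A.mulVec x i) ^ 2) ≤ max δ (δ ^ 2)) :
    ∀ x : Fin n → ℝ, sparse s x → x ⬝ᵥ x ≤ 1 →
      ∀ y : Fin m → ℝ, sparse s y → y ⬝ᵥ y ≤ 1 →
        |(Matrix.fromCols A (1 : Matrix (Fin m) (Fin m) ℝ)).mulVec (Sum.elim x y) ⬝ᵥ
            (Matrix.fromCols A (1 : Matrix (Fin m) (Fin m) ℝ)).mulVec (Sum.elim x y) -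
          Sum.elim x y ⬝ᵥ Sum.elim x y| ≤ 3 * max δ (δ ^ 2) := by
  intro x hx hx1 y hy hy1
  set D := max δ (δ ^ 2) with hD
  have hD0 : 0 ≤ D := le_trans hδ.le (le_max_left _ _)
  set u := A.mulVec x with hu
  have hmul : (Matrix.fromCols A 1).mulVec (Sum.elim x y) = u + y := by
    rw [Matrix.fromCols_mulVec_sumElim, Matrix.one_mulVec]
  have hdot : Sum.elim x y ⬝ᵥ Sum.elim x y = x ⬝ᵥ x + y ⬝ᵥ y := by
    simp [dotProduct, Fintype.sum_sum_type]
  rw [hmul, hdot]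
  have hexp : (u + y) ⬝ᵥ (u + y) = u ⬝ᵥ u + 2 * (u ⬝ᵥ y) + y ⬝ᵥ y := by
    rw [add_dotProduct, dotProduct_add, dotProduct_add, dotProduct_comm y u]; ring
  rw [hexp]
  have h1 : |u ⬝ᵥ u - x ⬝ᵥ x| ≤ D := by
    calc |u ⬝ᵥ u - x ⬝ᵥ x| ≤ D * (x ⬝ᵥ x) := hRIP x hx
    _ ≤ D * 1 := by
        apply mul_le_mul_of_nonneg_left hx1 hD0
    _ = D := mul_one D
  -- cross term
  set I : Finset (Fin m) := Finset.univ.filter (fun i => y i ≠ 0) with hI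
  have hIcard : I.card ≤ s := by
    have : (↑I : Set (Fin m)) = {i | y i ≠ 0} := by
      ext i; simp [hI]
    calc I.card = (↑I : Set (Fin m)).ncard := (Set.ncard_coe_finset I).symm
    _ = {i | y i ≠ 0}.ncard := by rw [this]
    _ ≤ s := hy
  have hy2 : ∀ i, 0 ≤ y i ^ 2 := fun i => sq_nonneg _
  have hyI : Real.sqrt (∑ i ∈ I, y i ^ 2) ≤ 1 := by
    have hsub : ∑ i ∈ I, y i ^ 2 ≤ ∑ i, y i ^ 2 :=
      Finset.sum_le_sum_of_subset_of_nonneg (Finset.subset_univ I) (fun i _ _ => hy2 i)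
    have : ∑ i, y i ^ 2 = y ⬝ᵥ y := by simp [dotProduct, sq]
    have h01 : ∑ i ∈ I, y i ^ 2 ≤ 1 := le_trans hsub (this ▸ hy1)
    calc Real.sqrt (∑ i ∈ I, y i ^ 2) ≤ Real.sqrt 1 := Real.sqrt_le_sqrt h01
    _ = 1 := Real.sqrt_one
  have huI : Real.sqrt (∑ i ∈ I, u i ^ 2) ≤ D := hkNorm x hx hx1 I hIcard
  have hcross : |u ⬝ᵥ y| ≤ D := by
    have heq : u ⬝ᵥ y = ∑ i ∈ I, u i * y i := by
      rw [dotProduct]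
      refine (Finset.sum_subset (Finset.subset_univ I) ?_).symm
      intro i _ hi
      simp [hI] at hi
      simp [hi]
    have hcs : (∑ i ∈ I, u i * y i) ^ 2 ≤ (∑ i ∈ I, u i ^ 2) * (∑ i ∈ I, y i ^ 2) :=
      Finset.sum_mul_sq_le_sq_mul_sq I u y
    have : |u ⬝ᵥ y| = Real.sqrt ((∑ i ∈ I, u i * y i) ^ 2) := by
      rw [heq, Real.sqrt_sq_eq_abs]
    rw [this]
    calc Real.sqrt ((∑ i ∈ I, u i * y i) ^ 2)
        ≤ Real.sqrt ((∑ i ∈ I, u i ^ 2) * (∑ i ∈ I, y i ^ 2)) := Real.sqrt_le_sqrt hcs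
    _ = Real.sqrt (∑ i ∈ I, u i ^ 2) * Real.sqrt (∑ i ∈ I, y i ^ 2) :=
        Real.sqrt_mul (Finset.sum_nonneg fun i _ => sq_nonneg _) _
    _ ≤ D * 1 := by
        apply mul_le_mul huI hyI (Real.sqrt_nonneg _) hD0
    _ = D := mul_one D
  calc |u ⬝ᵥ u + 2 * (u ⬝ᵥ y) + y ⬝ᵥ y - (x ⬝ᵥ x + y ⬝ᵥ y)|
      = |(u ⬝ᵥ u - x ⬝ᵥ x) + 2 * (u ⬝ᵥ y)| := by ring_nf
  _ ≤ |u ⬝ᵥ u - x ⬝ᵥ x| + |2 * (u ⬝ᵥ y)| := abs_add_le _ _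
  _ = |u ⬝ᵥ u - x ⬝ᵥ x| + 2 * |u ⬝ᵥ y| := by rw [abs_mul, abs_two]
  _ ≤ D + 2 * D := by linarith
  _ = 3 * D := by ring
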